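/- Let p : ℝ → ℝ be a smooth 2π-periodic function, the support function of an ℓ-convex Legendre curve with ℓ = 1, with β = p + p'', algebraic length L = ∫₀^{2π} p(θ) dθ and algebraic area A = (1/2)∫₀^{2π} p(θ)β(θ) dθ. Then for every real ξ ≤ 24, ∫₀^{2π} β'(θ)² dθ ≥ ξ(L²/(4π) − A). Moreover, for every ξ < 24, equality holds if and only if the curve is a circle, i.e. p(θ) = a₀ + a₁ cos θ + b₁ sin θ for some real constants a₀, a₁, b₁. -/

import Mathlib

open Real

/-- The curvature quantity `β = p + p''` of an ℓ-convex Legendre curve (ℓ = 1)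
with support function `p`. -/
noncomputable def betaF (p : ℝ → ℝ) : ℝ → ℝ := fun θ => p θ + iteratedDeriv 2 p θ

/-- The algebraic length `L = ∫₀^{2π} p`. -/
noncomputable def algLen (p : ℝ → ℝ) : ℝ := ∫ θ in (0:ℝ)..(2 * π), p θ

/-- The algebraic area `A = (1/2) ∫₀^{2π} p β`. -/
noncomputable def algArea (p : ℝ → ℝ) : ℝ :=
  (1 / 2) * ∫ θ in (0:ℝ)..(2 * π), p θ * betaF p θ

open MeasureTheory Set Complex intervalIntegral
open scoped ENNReal

local instance fact2pi : Fact ((0:ℝ) < 2 * Real.pi) := ⟨by positivity⟩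

/-- Fourier coefficient of (the complexification of) a real function, period 2π. -/
noncomputable def fc (f : ℝ → ℝ) (n : ℤ) : ℂ :=
  fourierCoeff (AddCircle.liftIco (2 * Real.pi) 0 (fun x => (f x : ℂ))) n

lemma fc_eq (f : ℝ → ℝ) (n : ℤ) :
    fc f n = (1 / (2 * Real.pi)) • ∫ x in (0:ℝ)..(2 * Real.pi),
      fourier (-n) (x : AddCircle (2 * Real.pi)) • (f x : ℂ) := by
  rw [fc, fourierCoeff_eq_intervalIntegral _ n 0]
  rw [zero_add]
  congr 1
  apply intervalIntegral.integral_congr_ae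
  have h2 : (volume : Measure ℝ) {(2 * Real.pi)} = 0 := measure_singleton _
  filter_upwards [compl_mem_ae_iff.2 h2] with x hx hx'
  have hxI : x ∈ Set.Ico (0:ℝ) (0 + 2 * Real.pi) := by
    rw [Set.uIoc_of_le (by positivity)] at hx'
    constructor
    · exact le_of_lt hx'.1
    · rw [zero_add]; exact lt_of_le_of_ne hx'.2 hx
  rw [AddCircle.liftIco_coe_apply hxI]

lemma Periodic.deriv' {f : ℝ → ℝ} (h : Function.Periodic f (2 * Real.pi)) :
    Function.Periodic (deriv f) (2 * Real.pi) := by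
  intro x
  have : (fun y => f (y + 2 * Real.pi)) = f := funext fun y => h y
  rw [← deriv_comp_add_const, this]

lemma fc_deriv {f : ℝ → ℝ} (hf : ContDiff ℝ (⊤ : ℕ∞) f)
    (hper : Function.Periodic f (2 * Real.pi)) (n : ℤ) :
    fc (deriv f) n = (Complex.I * n) * fc f n := by
  have hder : Differentiable ℝ f := hf.differentiable (by simp)
  have hcont' : Continuous (deriv f) := (contDiff_infty_iff_deriv.mp hf).2.continuous
  set u : ℝ → ℂ := fun x => fourier (-n) (x : AddCircle (2 * Real.pi)) with hu
  set c : ℂ := -2 * (Real.pi:ℂ) * Complex.I * (n:ℂ) / ((2 * Real.pi : ℝ) : ℂ) with hc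
  have huder : ∀ x : ℝ, HasDerivAt u (c * u x) x := fun x =>
    hasDerivAt_fourier_neg (2 * Real.pi) n x
  have hvder : ∀ x : ℝ, HasDerivAt (fun y => (f y : ℂ)) (((deriv f x : ℝ) : ℂ)) x := fun x =>
    ((hder x).hasDerivAt).ofReal_comp
  have hucont : Continuous u := (map_continuous (fourier (-n))).comp (AddCircle.continuous_mk' _)
  have key : ∫ x in (0:ℝ)..(2 * Real.pi), u x * ((deriv f x : ℝ) : ℂ)
      = u (2 * Real.pi) * (f (2 * Real.pi) : ℂ) - u 0 * (f 0 : ℂ)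
        - ∫ x in (0:ℝ)..(2 * Real.pi), (c * u x) * (f x : ℂ) := by
    apply intervalIntegral.integral_mul_deriv_eq_deriv_mul
      (fun x _ => huder x) (fun x _ => hvder x)
    · exact (continuous_const.mul hucont).intervalIntegrable 0 (2 * Real.pi)
    · exact (Complex.continuous_ofReal.comp hcont').intervalIntegrable 0 (2 * Real.pi)
  have hbd : u (2 * Real.pi) * (f (2 * Real.pi) : ℂ) = u 0 * (f 0 : ℂ) := by
    have h1 : ((2 * Real.pi : ℝ) : AddCircle (2 * Real.pi)) = ((0:ℝ) : AddCircle (2 * Real.pi)) := by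
      rw [AddCircle.coe_period, QuotientAddGroup.mk_zero]
    have h2 : f (2 * Real.pi) = f 0 := by simpa using hper 0
    simp only [hu, h1, h2]
  have hcval : c = -(Complex.I * n) := by
    rw [hc]
    have hπ : (Real.pi:ℂ) ≠ 0 := Complex.ofReal_ne_zero.mpr Real.pi_ne_zero
    field_simp
    push_cast; ring
  rw [fc_eq, fc_eq]
  simp only [smul_eq_mul]
  have key2 : ∫ x in (0:ℝ)..(2 * Real.pi), u x * ((deriv f x : ℝ) : ℂ)
      = (Complex.I * n) * ∫ x in (0:ℝ)..(2 * Real.pi), u x * (f x : ℂ) := by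
    rw [key, hbd, sub_self, zero_sub,
      show (fun x => (c * u x) * (f x : ℂ)) = (fun x => c * (u x * (f x:ℂ))) from
        funext fun x => by ring,
      intervalIntegral.integral_const_mul, hcval]
    ring
  show (1 / (2 * Real.pi)) • ∫ x in (0:ℝ)..(2 * Real.pi), u x * ((deriv f x:ℝ):ℂ)
      = Complex.I * ↑n * (1 / (2 * Real.pi)) • ∫ x in (0:ℝ)..(2 * Real.pi), u x * (f x:ℂ)
  rw [key2, Complex.real_smul, Complex.real_smul]
  ring

lemma fc_zero (f : ℝ → ℝ) :
    fc f 0 = (((1 / (2 * Real.pi)) * ∫ x in (0:ℝ)..(2 * Real.pi), f x : ℝ) : ℂ) := by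
  rw [fc_eq]
  simp only [neg_zero, fourier_zero, one_smul]
  rw [intervalIntegral.integral_ofReal]
  push_cast
  rw [Complex.real_smul]
  push_cast
  ring

lemma fc_add {f g : ℝ → ℝ} (hf : Continuous f) (hg : Continuous g) (n : ℤ) :
    fc (fun x => f x + g x) n = fc f n + fc g n := by
  have hu : Continuous fun x : ℝ => fourier (-n) (x : AddCircle (2 * Real.pi)) :=
    (map_continuous (fourier (-n))).comp (AddCircle.continuous_mk' _)
  rw [fc_eq, fc_eq, fc_eq, ← smul_add, ← intervalIntegral.integral_add]
  · push_cast
    simp only [smul_add]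
  · exact (hu.smul (Complex.continuous_ofReal.comp hf)).intervalIntegrable _ _
  · exact (hu.smul (Complex.continuous_ofReal.comp hg)).intervalIntegrable _ _

lemma fc_parseval {f : ℝ → ℝ} (hf : Continuous f)
    (hper : Function.Periodic f (2 * Real.pi)) :
    Summable (fun n : ℤ => ‖fc f n‖ ^ 2) ∧
    (2 * Real.pi) * ∑' n : ℤ, ‖fc f n‖ ^ 2
      = ∫ x in (0:ℝ)..(2 * Real.pi), (f x) ^ 2 := by
  set F : ℝ → ℂ := fun x => (f x : ℂ) with hF
  have hG0 : F 0 = F (2 * Real.pi) := by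
    simp only [hF]
    norm_cast
    exact (hper 0).symm.trans (by rw [zero_add])
  have hGcont : Continuous (AddCircle.liftIco (2 * Real.pi) 0 F) :=
    AddCircle.liftIco_zero_continuous hG0
      (Complex.continuous_ofReal.comp hf).continuousOn
  set K : C(AddCircle (2 * Real.pi), ℂ) := ⟨_, hGcont⟩ with hK
  set FL := ContinuousMap.toLp (E := ℂ) 2 AddCircle.haarAddCircle ℂ K with hFL
  have hcoeff : ∀ n : ℤ, fourierCoeff FL n = fc f n := fun n => fourierCoeff_toLp K n
  have hrepr : ∀ n : ℤ, fourierBasis.repr FL n = fc f n := fun n => by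
    rw [fourierBasis_repr]; exact hcoeff n
  constructor
  · have hmem : Memℓp (fun n : ℤ => fourierBasis.repr FL n) 2 := (fourierBasis.repr FL).property
    have := hmem.summable (by norm_num)
    simp only [hrepr] at this
    have h2 : ((2 : ℝ≥0∞).toReal) = (2:ℝ) := by norm_num
    rw [h2] at this
    refine this.congr fun n => ?_
    rw [← Real.rpow_natCast ‖fc f n‖ 2]
    norm_num
  · have hpar := tsum_sq_fourierCoeff FL
    simp only [hcoeff] at hpar
    rw [hpar]
    have hae : (fun t => ‖FL t‖ ^ 2) =ᵐ[(AddCircle.haarAddCircle :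
        Measure (AddCircle (2 * Real.pi)))] fun t => ‖K t‖ ^ 2 := by
      filter_upwards [ContinuousMap.coeFn_toLp (p := 2)
        (μ := (AddCircle.haarAddCircle : Measure (AddCircle (2 * Real.pi)))) (𝕜 := ℂ) K] with t ht
      rw [ht]
    rw [integral_congr_ae hae]
    have hvol : ∫ t, ‖K t‖ ^ 2 ∂(volume : Measure (AddCircle (2 * Real.pi)))
        = (2 * Real.pi) * ∫ t, ‖K t‖ ^ 2 ∂(AddCircle.haarAddCircle) := by
      rw [AddCircle.volume_eq_smul_haarAddCircle, MeasureTheory.integral_smul_measure,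
        ENNReal.toReal_ofReal (by positivity), smul_eq_mul]
    have hint : ∫ x in (0:ℝ)..(0 + 2 * Real.pi), ‖K (x : AddCircle (2 * Real.pi))‖ ^ 2
        = ∫ t, ‖K t‖ ^ 2 ∂(volume : Measure (AddCircle (2 * Real.pi))) :=
      AddCircle.intervalIntegral_preimage (2 * Real.pi) 0 (fun z => ‖K z‖ ^ 2)
    rw [← hvol, ← hint, zero_add]
    apply intervalIntegral.integral_congr_ae
    have h2 : (volume : Measure ℝ) {(2 * Real.pi)} = 0 := measure_singleton _
    filter_upwards [compl_mem_ae_iff.2 h2] with x hx hx'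
    have hxI : x ∈ Set.Ico (0:ℝ) (0 + 2 * Real.pi) := by
      rw [Set.uIoc_of_le (by positivity)] at hx'
      exact ⟨le_of_lt hx'.1, by rw [zero_add]; exact lt_of_le_of_ne hx'.2 hx⟩
    show ‖K ((x:ℝ) : AddCircle (2 * Real.pi))‖ ^ 2 = f x ^ 2
    rw [hK]
    show ‖AddCircle.liftIco (2 * Real.pi) 0 F ((x:ℝ) : AddCircle (2 * Real.pi))‖ ^ 2 = f x ^ 2
    rw [AddCircle.liftIco_coe_apply hxI]
    simp [hF, Complex.norm_real, _root_.sq_abs]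

lemma key_int (n : ℤ) : 12 * (n:ℝ)^2 ≤ (n:ℝ)^2 * ((n:ℝ)^2 - 1)^2 + 12 := by
  rcases lt_or_ge n.natAbs 3 with h | h
  · have : n = 0 ∨ n = 1 ∨ n = -1 ∨ n = 2 ∨ n = -2 := by omega
    rcases this with rfl|rfl|rfl|rfl|rfl <;> norm_num
  · have habs : |(n:ℝ)| = (n.natAbs : ℝ) := by
      rw [Nat.cast_natAbs]
      norm_cast
    have h3 : (3:ℝ) ≤ |(n:ℝ)| := by
      rw [habs]; exact_mod_cast h
    have h9 : (9:ℝ) ≤ (n:ℝ)^2 := by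
      nlinarith [_root_.sq_abs ((n:ℝ)), abs_nonneg ((n:ℝ))]
    nlinarith [mul_nonneg (sub_nonneg.mpr h9) (sq_nonneg ((n:ℝ)^2 - 1)),
      mul_nonneg (sub_nonneg.mpr h9) (sub_nonneg.mpr h9)]

lemma norm_sq_I_mul (n : ℤ) (c : ℂ) :
    ‖(Complex.I * (n:ℂ)) * c‖^2 = (n:ℝ)^2 * ‖c‖^2 := by
  have hn : ‖(n:ℂ)‖ = |(n:ℝ)| := by
    rw [← Complex.ofReal_intCast, Complex.norm_real, Real.norm_eq_abs]
  rw [norm_mul, norm_mul, Complex.norm_I, one_mul, hn]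
  rw [mul_pow, _root_.sq_abs]

lemma norm_sq_beta_coeff (n : ℤ) (c : ℂ) :
    ‖(Complex.I * (n:ℂ) + (Complex.I * (n:ℂ))^3) * c‖^2
      = (n:ℝ)^2 * ((n:ℝ)^2 - 1)^2 * ‖c‖^2 := by
  have h1 : (Complex.I * (n:ℂ) + (Complex.I * (n:ℂ))^3)
      = Complex.I * ((((n:ℝ) - (n:ℝ)^3 : ℝ)) : ℂ) := by
    push_cast
    linear_combination ((n:ℂ)^3 * Complex.I) * Complex.I_sq
  rw [h1, norm_mul, norm_mul, Complex.norm_I, one_mul, Complex.norm_real,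
    Real.norm_eq_abs, mul_pow, _root_.sq_abs]
  ring

lemma core (p : ℝ → ℝ) (hp : ContDiff ℝ (⊤ : ℕ∞) p)
    (hper : Function.Periodic p (2 * Real.pi)) :
    0 ≤ (algLen p) ^ 2 / (4 * Real.pi) - algArea p ∧
    24 * ((algLen p) ^ 2 / (4 * Real.pi) - algArea p)
      ≤ ∫ θ in (0:ℝ)..(2 * Real.pi), (deriv (betaF p) θ) ^ 2 := by
  have hp1 : ContDiff ℝ (⊤ : ℕ∞) (deriv p) := (contDiff_infty_iff_deriv.mp hp).2
  have hp2 : ContDiff ℝ (⊤ : ℕ∞) (deriv (deriv p)) := (contDiff_infty_iff_deriv.mp hp1).2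
  have hp3 : ContDiff ℝ (⊤ : ℕ∞) (deriv (deriv (deriv p))) := (contDiff_infty_iff_deriv.mp hp2).2
  have hper1 : Function.Periodic (deriv p) (2 * Real.pi) := Periodic.deriv' hper
  have hper2 : Function.Periodic (deriv (deriv p)) (2 * Real.pi) := Periodic.deriv' hper1
  have hper3 : Function.Periodic (deriv (deriv (deriv p))) (2 * Real.pi) := Periodic.deriv' hper2
  have hdiff : ∀ f : ℝ → ℝ, ContDiff ℝ (⊤ : ℕ∞) f → Differentiable ℝ f := fun f hf =>
    hf.differentiable (by simp)
  -- betaF and its derivative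
  have hbeta : betaF p = fun θ => p θ + deriv (deriv p) θ := by
    funext θ
    simp [betaF, iteratedDeriv_succ, iteratedDeriv_zero]
  have hbeta' : deriv (betaF p) = fun θ => deriv p θ + deriv (deriv (deriv p)) θ := by
    rw [hbeta]
    funext θ
    rw [deriv_fun_add ((hdiff p hp) θ) ((hdiff _ hp2) θ)]
  have hperb' : Function.Periodic (fun θ => deriv p θ + deriv (deriv (deriv p)) θ)
      (2 * Real.pi) := hper1.add hper3
  have hcontb' : Continuous (fun θ => deriv p θ + deriv (deriv (deriv p)) θ) :=
    hp1.continuous.add hp3.continuous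
  -- Fourier coefficients
  have hc1 : ∀ n : ℤ, fc (deriv p) n = (Complex.I * n) * fc p n := fc_deriv hp hper
  have hc2 : ∀ n : ℤ, fc (deriv (deriv p)) n = (Complex.I * n) * fc (deriv p) n :=
    fc_deriv hp1 hper1
  have hc3 : ∀ n : ℤ, fc (deriv (deriv (deriv p))) n
      = (Complex.I * n) * fc (deriv (deriv p)) n := fc_deriv hp2 hper2
  have hcb : ∀ n : ℤ, fc (fun θ => deriv p θ + deriv (deriv (deriv p)) θ) n
      = (Complex.I * (n:ℂ) + (Complex.I * (n:ℂ))^3) * fc p n := by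
    intro n
    rw [fc_add hp1.continuous hp3.continuous, hc1, hc3, hc2, hc1]
    ring
  -- Parseval
  set X : ℤ → ℝ := fun n => ‖fc p n‖^2 with hX
  obtain ⟨hSX, hEX⟩ := fc_parseval hp.continuous hper
  obtain ⟨hSY, hEY⟩ := fc_parseval hp1.continuous hper1
  obtain ⟨hSZ, hEZ⟩ := fc_parseval hcontb' hperb'
  have hYX : (fun n : ℤ => ‖fc (deriv p) n‖^2) = fun n : ℤ => (n:ℝ)^2 * X n := by
    funext n; rw [hc1 n, norm_sq_I_mul]
  have hZX : (fun n : ℤ => ‖fc (fun θ => deriv p θ + deriv (deriv (deriv p)) θ) n‖^2)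
      = fun n : ℤ => (n:ℝ)^2 * ((n:ℝ)^2 - 1)^2 * X n := by
    funext n; rw [hcb n, norm_sq_beta_coeff]
  rw [hYX] at hSY hEY
  rw [hZX] at hSZ hEZ
  -- length and area
  have hL0 : fc p 0 = (((1 / (2 * Real.pi)) * algLen p : ℝ) : ℂ) := fc_zero p
  have hX0 : X 0 = (algLen p / (2 * Real.pi))^2 := by
    rw [hX]
    simp only [hL0, Complex.norm_real, Real.norm_eq_abs, _root_.sq_abs]
    ring
  have hparts : ∫ θ in (0:ℝ)..(2 * Real.pi), p θ * deriv (deriv p) θ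
      = -∫ θ in (0:ℝ)..(2 * Real.pi), (deriv p θ)^2 := by
    have h := intervalIntegral.integral_mul_deriv_eq_deriv_mul
      (a := (0:ℝ)) (b := 2 * Real.pi)
      (u := p) (u' := deriv p) (v := deriv p) (v' := deriv (deriv p))
      (fun x _ => ((hdiff p hp) x).hasDerivAt)
      (fun x _ => ((hdiff _ hp1) x).hasDerivAt)
      (hp1.continuous.intervalIntegrable _ _)
      (hp2.continuous.intervalIntegrable _ _)
    rw [h]
    have e1 : p (2 * Real.pi) = p 0 := by simpa using hper 0
    have e2 : deriv p (2 * Real.pi) = deriv p 0 := by simpa using hper1 0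
    rw [e1, e2]
    rw [show (∫ x in (0:ℝ)..(2 * Real.pi), deriv p x * deriv p x)
        = ∫ x in (0:ℝ)..(2 * Real.pi), (deriv p x)^2 from
      intervalIntegral.integral_congr fun x _ => (sq (deriv p x)).symm]
    ring
  have hA : algArea p = (1/2) * (∫ θ in (0:ℝ)..(2 * Real.pi), (p θ)^2)
      - (1/2) * (∫ θ in (0:ℝ)..(2 * Real.pi), (deriv p θ)^2) := by
    rw [algArea]
    have hsplit : (∫ θ in (0:ℝ)..(2 * Real.pi), p θ * betaF p θ)
        = (∫ θ in (0:ℝ)..(2 * Real.pi), (p θ)^2)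
          + ∫ θ in (0:ℝ)..(2 * Real.pi), p θ * deriv (deriv p) θ := by
      rw [← intervalIntegral.integral_add (f := fun θ => p θ ^ 2)
        (g := fun θ => p θ * deriv (deriv p) θ)
        ((hp.continuous.pow 2).intervalIntegrable _ _)
        ((hp.continuous.mul hp2.continuous).intervalIntegrable _ _)]
      apply intervalIntegral.integral_congr
      intro x _
      rw [hbeta]
      ring
    rw [hsplit, hparts]
    ring
  -- summability of the indicator
  set ind : ℤ → ℝ := fun n => if n = 0 then X 0 else 0 with hind
  have hSind : Summable ind := summable_of_ne_finset_zero (s := {(0:ℤ)})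
    (fun n hn => if_neg (by simpa using hn))
  have hTind : ∑' n : ℤ, ind n = X 0 := tsum_ite_eq (0:ℤ) (fun _ => X 0)
  have hXnonneg : ∀ n : ℤ, 0 ≤ X n := fun n => sq_nonneg _
  -- Wirtinger: ∑ X ≤ X 0 + ∑ n² X
  have hW : ∑' n : ℤ, X n ≤ (∑' n : ℤ, (n:ℝ)^2 * X n) + X 0 := by
    have hle : ∀ n : ℤ, X n ≤ (n:ℝ)^2 * X n + ind n := by
      intro n
      rcases eq_or_ne n 0 with rfl | hn
      · simp [hind]
      · have h1 : (1:ℝ) ≤ (n:ℝ)^2 := by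
          have h1' : (1:ℤ) ≤ n^2 := by rcases hn.lt_or_gt with h|h <;> nlinarith
          exact_mod_cast h1'
        simp only [hind, if_neg hn, add_zero]
        nlinarith [hXnonneg n]
    calc ∑' n : ℤ, X n ≤ ∑' n : ℤ, ((n:ℝ)^2 * X n + ind n) :=
          Summable.tsum_le_tsum hle hSX (hSY.add hSind)
      _ = (∑' n : ℤ, (n:ℝ)^2 * X n) + X 0 := by rw [Summable.tsum_add hSY hSind, hTind]
  -- main: 12 X0 + 12 ∑ n²X ≤ ∑ n²(n²-1)²X + 12 ∑ X
  have hM : 12 * X 0 + 12 * ∑' n : ℤ, (n:ℝ)^2 * X n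
      ≤ (∑' n : ℤ, (n:ℝ)^2 * ((n:ℝ)^2-1)^2 * X n) + 12 * ∑' n : ℤ, X n := by
    have hle : ∀ n : ℤ, 12 * ((n:ℝ)^2 * X n) + 12 * ind n
        ≤ (n:ℝ)^2 * ((n:ℝ)^2-1)^2 * X n + 12 * X n := by
      intro n
      rcases eq_or_ne n 0 with rfl | hn
      · simp [hind]
      · simp only [hind, if_neg hn, mul_zero, add_zero]
        nlinarith [mul_le_mul_of_nonneg_right (key_int n) (hXnonneg n)]
    have hs1 : Summable (fun n : ℤ => 12 * ((n:ℝ)^2 * X n) + 12 * ind n) :=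
      (hSY.mul_left 12).add (hSind.mul_left 12)
    have hs2 : Summable (fun n : ℤ => (n:ℝ)^2 * ((n:ℝ)^2-1)^2 * X n + 12 * X n) :=
      hSZ.add (hSX.mul_left 12)
    have := Summable.tsum_le_tsum hle hs1 hs2
    rw [Summable.tsum_add (hSY.mul_left 12) (hSind.mul_left 12), Summable.tsum_add hSZ (hSX.mul_left 12),
      tsum_mul_left, tsum_mul_left, tsum_mul_left, hTind] at this
    linarith
  -- put everything together
  have hpi : (0:ℝ) < Real.pi := Real.pi_pos
  set SX := ∑' n : ℤ, X n
  set SY := ∑' n : ℤ, (n:ℝ)^2 * X n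
  set SZ := ∑' n : ℤ, (n:ℝ)^2 * ((n:ℝ)^2-1)^2 * X n
  have hD : (algLen p) ^ 2 / (4 * Real.pi) - algArea p
      = Real.pi * (X 0 + SY - SX) := by
    have hL2 : (algLen p)^2 = (2 * Real.pi)^2 * X 0 := by
      rw [hX0]; field_simp
    rw [hL2, hA, ← hEX, ← hEY]
    field_simp
    ring
  have hZgoal : (∫ θ in (0:ℝ)..(2 * Real.pi), (deriv (betaF p) θ) ^ 2)
      = 2 * Real.pi * SZ := by
    rw [hbeta']
    exact hEZ.symm
  constructor
  · rw [hD]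
    nlinarith [hW]
  · rw [hD, hZgoal]
    nlinarith [hM, hpi]

lemma circle_of_zero_integral (p : ℝ → ℝ) (hp : ContDiff ℝ (⊤ : ℕ∞) p)
    (hper : Function.Periodic p (2 * Real.pi))
    (hzero : (∫ θ in (0:ℝ)..(2 * Real.pi), (deriv (betaF p) θ) ^ 2) = 0) :
    ∃ a₀ a₁ b₁ : ℝ, ∀ θ : ℝ, p θ = a₀ + a₁ * Real.cos θ + b₁ * Real.sin θ := by
  have hp1 : ContDiff ℝ (⊤ : ℕ∞) (deriv p) := (contDiff_infty_iff_deriv.mp hp).2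
  have hp2 : ContDiff ℝ (⊤ : ℕ∞) (deriv (deriv p)) := (contDiff_infty_iff_deriv.mp hp1).2
  have hp3 : ContDiff ℝ (⊤ : ℕ∞) (deriv (deriv (deriv p))) := (contDiff_infty_iff_deriv.mp hp2).2
  have hper1 : Function.Periodic (deriv p) (2 * Real.pi) := Periodic.deriv' hper
  have hper2 : Function.Periodic (deriv (deriv p)) (2 * Real.pi) := Periodic.deriv' hper1
  have hper3 : Function.Periodic (deriv (deriv (deriv p))) (2 * Real.pi) := Periodic.deriv' hper2
  have hdiff : ∀ f : ℝ → ℝ, ContDiff ℝ (⊤ : ℕ∞) f → Differentiable ℝ f := fun f hf =>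
    hf.differentiable (by simp)
  have hbeta : betaF p = fun θ => p θ + deriv (deriv p) θ := by
    funext θ
    simp [betaF, iteratedDeriv_succ, iteratedDeriv_zero]
  have hbeta' : deriv (betaF p) = fun θ => deriv p θ + deriv (deriv (deriv p)) θ := by
    rw [hbeta]
    funext θ
    rw [deriv_fun_add ((hdiff p hp) θ) ((hdiff _ hp2) θ)]
  set g : ℝ → ℝ := fun θ => deriv p θ + deriv (deriv (deriv p)) θ with hg
  have hgc : Continuous g := hp1.continuous.add hp3.continuous
  have hgper : Function.Periodic g (2 * Real.pi) := hper1.add hper3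
  have h2pi : (0:ℝ) < 2 * Real.pi := by positivity
  -- g vanishes on [0, 2π]
  have hIcc : ∀ c ∈ Set.Icc (0:ℝ) (2 * Real.pi), g c = 0 := by
    intro c hc
    by_contra hne
    have hpos : 0 < (g c)^2 := by positivity
    have hlt : (∫ θ in (0:ℝ)..(2 * Real.pi), (0:ℝ))
        < ∫ θ in (0:ℝ)..(2 * Real.pi), (g θ)^2 := by
      apply intervalIntegral.integral_lt_integral_of_continuousOn_of_le_of_exists_lt h2pi
        continuousOn_const ((hgc.pow 2).continuousOn)
        (fun x _ => sq_nonneg (g x)) ⟨c, hc, hpos⟩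
    rw [intervalIntegral.integral_const, smul_zero] at hlt
    rw [hbeta'] at hzero
    rw [show (∫ θ in (0:ℝ)..(2 * Real.pi), ((fun θ => deriv p θ + deriv (deriv (deriv p)) θ) θ)^2)
      = ∫ θ in (0:ℝ)..(2 * Real.pi), (g θ)^2 from rfl] at hzero
    linarith
  have hgzero : ∀ x : ℝ, g x = 0 := by
    intro x
    obtain ⟨y, hy, hxy⟩ := hgper.exists_mem_Ico₀ h2pi x
    rw [hxy]
    exact hIcc y ⟨hy.1, hy.2.le⟩
  -- betaF p is constant
  have hbc : ∀ θ : ℝ, betaF p θ = betaF p 0 := by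
    intro θ
    apply is_const_of_deriv_eq_zero
    · rw [hbeta]
      exact (hdiff p hp).add (hdiff _ hp2)
    · intro x
      rw [hbeta']
      exact hgzero x
  set a₀ : ℝ := betaF p 0 with ha0
  set a₁ : ℝ := p 0 - a₀ with ha1
  set b₁ : ℝ := deriv p 0 with hb1
  refine ⟨a₀, a₁, b₁, ?_⟩
  -- ODE: p'' = a₀ - p, energy argument
  have hp2eq : ∀ θ : ℝ, deriv (deriv p) θ = a₀ - p θ := by
    intro θ
    have := hbc θ
    rw [hbeta] at this
    simp only at this
    linarith [this]
  set w : ℝ → ℝ := fun θ => p θ - a₀ - a₁ * Real.cos θ - b₁ * Real.sin θ with hw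
  set w1 : ℝ → ℝ := fun θ => deriv p θ + a₁ * Real.sin θ - b₁ * Real.cos θ with hw1
  have hwder : ∀ θ : ℝ, HasDerivAt w (w1 θ) θ := by
    intro θ
    have h := (((hdiff p hp) θ).hasDerivAt.sub_const a₀).sub
      (((Real.hasDerivAt_cos θ).const_mul a₁))
    have h2 : HasDerivAt w _ θ := h.sub ((Real.hasDerivAt_sin θ).const_mul b₁)
    convert h2 using 1
    simp only [hw1]
    ring
  have hw1der : ∀ θ : ℝ, HasDerivAt w1 (-(w θ)) θ := by
    intro θ
    have h : HasDerivAt w1 _ θ := (((hdiff _ hp1) θ).hasDerivAt.add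
      ((Real.hasDerivAt_sin θ).const_mul a₁)).sub ((Real.hasDerivAt_cos θ).const_mul b₁)
    convert h using 1
    rw [hp2eq θ]
    simp only [hw]
    ring
  set E : ℝ → ℝ := fun θ => (w θ)^2 + (w1 θ)^2 with hE
  have hEder : ∀ θ : ℝ, HasDerivAt E 0 θ := by
    intro θ
    have h : HasDerivAt E _ θ := ((hwder θ).pow 2).add ((hw1der θ).pow 2)
    convert h using 1
    ring
  have hEconst : ∀ θ : ℝ, E θ = E 0 := by
    intro θ
    apply is_const_of_deriv_eq_zero
    · exact fun x => (hEder x).differentiableAt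
    · exact fun x => (hEder x).deriv
  have hE0 : E 0 = 0 := by
    simp only [hE, hw, hw1, Real.cos_zero, Real.sin_zero]
    rw [ha1]
    ring
  intro θ
  have hEθ := (hEconst θ).trans hE0
  have hwθ : w θ = 0 := by
    simp only [hE] at hEθ
    nlinarith [sq_nonneg (w θ), sq_nonneg (w1 θ)]
  simp only [hw] at hwθ
  linarith

lemma circle_values (a₀ a₁ b₁ : ℝ) (p : ℝ → ℝ)
    (hpeq : ∀ θ : ℝ, p θ = a₀ + a₁ * Real.cos θ + b₁ * Real.sin θ) :
    (∫ θ in (0:ℝ)..(2 * Real.pi), (deriv (betaF p) θ) ^ 2) = 0 ∧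
    (algLen p) ^ 2 / (4 * Real.pi) - algArea p = 0 := by
  have hp' : p = fun θ => a₀ + a₁ * Real.cos θ + b₁ * Real.sin θ := funext hpeq
  have hd1 : deriv p = fun θ => -(a₁ * Real.sin θ) + b₁ * Real.cos θ := by
    funext x
    rw [hp']
    have h : HasDerivAt (fun θ => a₀ + a₁ * Real.cos θ + b₁ * Real.sin θ)
        (0 + a₁ * (-Real.sin x) + b₁ * Real.cos x) x :=
      ((hasDerivAt_const x a₀).add ((Real.hasDerivAt_cos x).const_mul a₁)).add
        ((Real.hasDerivAt_sin x).const_mul b₁)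
    rw [h.deriv]
    ring
  have hd2 : deriv (deriv p) = fun θ => -(a₁ * Real.cos θ) - b₁ * Real.sin θ := by
    funext x
    rw [hd1]
    have h : HasDerivAt (fun θ => -(a₁ * Real.sin θ) + b₁ * Real.cos θ)
        (-(a₁ * Real.cos x) + b₁ * (-Real.sin x)) x :=
      (((Real.hasDerivAt_sin x).const_mul a₁).neg).add ((Real.hasDerivAt_cos x).const_mul b₁)
    rw [h.deriv]
    ring
  have hbeta : betaF p = fun _ => a₀ := by
    funext θ
    have h2 : iteratedDeriv 2 p θ = deriv (deriv p) θ := by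
      simp [iteratedDeriv_succ, iteratedDeriv_zero]
    rw [betaF, h2, hd2, hpeq θ]
    ring
  have hbeta' : deriv (betaF p) = fun _ => (0:ℝ) := by
    rw [hbeta]
    funext θ
    exact deriv_const θ a₀
  have hL : algLen p = 2 * Real.pi * a₀ := by
    rw [algLen, hp']
    rw [intervalIntegral.integral_add (f := fun θ => a₀ + a₁ * Real.cos θ)
        (g := fun θ => b₁ * Real.sin θ)
        ((continuous_const.add (continuous_const.mul Real.continuous_cos)).intervalIntegrable _ _)
        ((continuous_const.mul Real.continuous_sin).intervalIntegrable _ _),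
      intervalIntegral.integral_add (f := fun _ => a₀) (g := fun θ => a₁ * Real.cos θ)
        (continuous_const.intervalIntegrable _ _)
        ((continuous_const.mul Real.continuous_cos).intervalIntegrable _ _),
      intervalIntegral.integral_const, intervalIntegral.integral_const_mul,
      intervalIntegral.integral_const_mul, integral_cos, integral_sin]
    simp [Real.sin_two_pi, Real.cos_two_pi]
  have hA : algArea p = Real.pi * a₀^2 := by
    rw [algArea, hbeta]
    rw [show (∫ θ in (0:ℝ)..(2 * Real.pi), p θ * (fun _ => a₀) θ)
        = ∫ θ in (0:ℝ)..(2 * Real.pi), p θ * a₀ from rfl]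
    rw [intervalIntegral.integral_mul_const]
    rw [← algLen, hL]
    ring
  constructor
  · rw [hbeta']
    simp
  · rw [hL, hA]
    have hpi : Real.pi ≠ 0 := Real.pi_ne_zero
    field_simp
    ring

theorem beta_deriv_square_integral_inequality
    (p : ℝ → ℝ) (hp : ContDiff ℝ (⊤ : ℕ∞) p)
    (hper : Function.Periodic p (2 * π)) :
    (∀ ξ : ℝ, ξ ≤ 24 →
      ξ * ((algLen p) ^ 2 / (4 * π) - algArea p)
        ≤ ∫ θ in (0:ℝ)..(2 * π), (deriv (betaF p) θ) ^ 2) ∧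
    (∀ ξ : ℝ, ξ < 24 →
      ((∫ θ in (0:ℝ)..(2 * π), (deriv (betaF p) θ) ^ 2)
          = ξ * ((algLen p) ^ 2 / (4 * π) - algArea p) ↔
        ∃ a₀ a₁ b₁ : ℝ, ∀ θ : ℝ,
          p θ = a₀ + a₁ * Real.cos θ + b₁ * Real.sin θ)) := by
  obtain ⟨hD, h24⟩ := core p hp hper
  constructor
  · intro ξ hξ
    calc ξ * ((algLen p) ^ 2 / (4 * π) - algArea p)
        ≤ 24 * ((algLen p) ^ 2 / (4 * π) - algArea p) :=
          mul_le_mul_of_nonneg_right hξ hD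
      _ ≤ _ := h24
  · intro ξ hξ
    constructor
    · intro heq
      have h1 : ξ * ((algLen p) ^ 2 / (4 * π) - algArea p)
          ≤ 24 * ((algLen p) ^ 2 / (4 * π) - algArea p) :=
        mul_le_mul_of_nonneg_right hξ.le hD
      have h2 : 24 * ((algLen p) ^ 2 / (4 * π) - algArea p)
          ≤ ξ * ((algLen p) ^ 2 / (4 * π) - algArea p) := heq ▸ h24
      have hD0 : (algLen p) ^ 2 / (4 * π) - algArea p = 0 := by
        by_contra hne
        have hpos : 0 < (algLen p) ^ 2 / (4 * π) - algArea p := lt_of_le_of_ne hD (Ne.symm hne)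
        have h3 : (24:ℝ) = ξ := mul_right_cancel₀ (ne_of_gt hpos) (le_antisymm h2 h1)
        linarith
      have hzero : (∫ θ in (0:ℝ)..(2 * π), (deriv (betaF p) θ) ^ 2) = 0 := by
        rw [heq, hD0, mul_zero]
      exact circle_of_zero_integral p hp hper hzero
    · rintro ⟨a₀, a₁, b₁, h⟩
      obtain ⟨h1, h2⟩ := circle_values a₀ a₁ b₁ p h
      rw [h1, h2, mul_zero]
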